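/- Let H be a 4-uniform hypergraph with vertex set V = A ∪ B, where A and B are disjoint and |A| = |B| = n. Suppose the number of edges of H with exactly two vertices in A is less than c·n^4, and every set of 3 vertices of V is contained in at least (1−c₁)·n edges of H. Let H₀ be the 4-graph on the same vertex set whose edges are all quadruples intersecting A in exactly one or three vertices. Then |E(H₀) \ E(H)| ≤ (1/3)(c₁+4c)·n^4 + O(n^3); more precisely |E(H₀)\E(H)| ≤ (1/3)(c₁+4c)·n^4 + 10·n^3 for all sufficiently large n. -/

import Mathlib

open Finset

section Aux

variable {V : Type} [Fintype V] [DecidableEq V]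

lemma inter_card_split (A B e : Finset V) (hd : Disjoint A B) (hu : A ∪ B = Finset.univ) :
    (e ∩ A).card + (e ∩ B).card = e.card := by
  rw [← card_union_of_disjoint (hd.mono inter_subset_right inter_subset_right),
    ← inter_union_distrib_left, hu, inter_univ]

lemma erase_inter_of_not_mem (e A : Finset V) (x : V) (hx : x ∉ A) : e.erase x ∩ A = e ∩ A := by
  ext y
  simp only [mem_inter, mem_erase]
  constructor
  · rintro ⟨⟨-, hy⟩, hyA⟩; exact ⟨hy, hyA⟩
  · rintro ⟨hy, hyA⟩; exact ⟨⟨fun h => hx (h ▸ hyA), hy⟩, hyA⟩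

lemma master (c c₁ : ℝ) (hc₁ : 0 ≤ c₁) (n : ℕ) (A B : Finset V) (H : Finset (Finset V))
    (hd : Disjoint A B) (hu : A ∪ B = Finset.univ) (hA : A.card = n) (hB : B.card = n)
    (hH4 : ∀ e ∈ H, e.card = 4)
    (hH2 : ((H.filter (fun e => (e ∩ A).card = 2)).card : ℝ) < c * n ^ 4)
    (hcod : ∀ S : Finset V, S.card = 3 →
      (1 - c₁) * n ≤ ((Finset.univ.filter (fun x => x ∉ S ∧ insert x S ∈ H)).card : ℝ)) :
    ((((Finset.univ : Finset V).powersetCard 4).filter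
        (fun e => (e ∩ A).card = 1 ∧ e ∉ H)).card : ℝ)
      ≤ (1/3) * ((c₁/2) * n ^ 4 + 2 * c * n ^ 4) := by
  classical
  set M := (((Finset.univ : Finset V).powersetCard 4).filter
      (fun e => (e ∩ A).card = 1 ∧ e ∉ H)) with hM
  set T := (((Finset.univ : Finset V).powersetCard 3).filter
      (fun S => (S ∩ A).card = 1)) with hT
  set badB : Finset V → Finset V := fun S => (B \ S).filter (fun x => insert x S ∉ H) with hbadB
  set goodA : Finset V → Finset V := fun S => A.filter (fun x => x ∉ S ∧ insert x S ∈ H)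
    with hgoodA
  -- facts about members of M
  have hMfact : ∀ e ∈ M, e.card = 4 ∧ (e ∩ A).card = 1 ∧ e ∉ H ∧ (e ∩ B).card = 3 := by
    intro e he
    rw [hM, mem_filter, mem_powersetCard] at he
    obtain ⟨⟨-, hc4⟩, h1, hnH⟩ := he
    refine ⟨hc4, h1, hnH, ?_⟩
    have := inter_card_split A B e hd hu
    omega
  have hTfact : ∀ S ∈ T, S.card = 3 ∧ (S ∩ A).card = 1 ∧ (S ∩ B).card = 2 := by
    intro S hS
    rw [hT, mem_filter, mem_powersetCard] at hS
    obtain ⟨⟨-, hc3⟩, h1⟩ := hS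
    refine ⟨hc3, h1, ?_⟩
    have := inter_card_split A B S hd hu
    omega
  -- Step 1 : 3 * M.card ≤ ∑ badB
  have step1 : 3 * M.card ≤ ∑ S ∈ T, (badB S).card := by
    have hinj : ∀ e : Finset V, Function.Injective (fun x : V => (e.erase x, x)) := by
      intro e a b h
      exact congrArg Prod.snd h
    have hQcard : (M.biUnion (fun e => (e ∩ B).image (fun x => (e.erase x, x)))).card
        = 3 * M.card := by
      rw [card_biUnion]
      · rw [Finset.sum_congr rfl (fun e he => ?_), sum_const, smul_eq_mul, mul_comm]
        rw [card_image_of_injective _ (hinj e)]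
        exact (hMfact e he).2.2.2
      · intro e he e' he' hne
        rw [Function.onFun, disjoint_left]
        rintro ⟨S, x⟩ h1 h2
        simp only [mem_image, Prod.mk.injEq] at h1 h2
        obtain ⟨x₁, hx₁, hS₁, hx₁'⟩ := h1
        obtain ⟨x₂, hx₂, hS₂, hx₂'⟩ := h2
        subst hx₁' hx₂'
        apply hne
        rw [← insert_erase (mem_inter.1 hx₁).1, ← insert_erase (mem_inter.1 hx₂).1, hS₁, hS₂]
    have hsub : (M.biUnion (fun e => (e ∩ B).image (fun x => (e.erase x, x))))
        ⊆ T.biUnion (fun S => (badB S).image (fun x => (S, x))) := by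
      intro p hp
      rw [mem_biUnion] at hp ⊢
      obtain ⟨e, he, hp⟩ := hp
      rw [mem_image] at hp
      obtain ⟨x, hx, rfl⟩ := hp
      obtain ⟨hxe, hxB⟩ := mem_inter.1 hx
      obtain ⟨hc4, h1, hnH, -⟩ := hMfact e he
      have hxA : x ∉ A := fun h => (disjoint_left.1 hd h hxB)
      refine ⟨e.erase x, ?_, ?_⟩
      · rw [hT, mem_filter, mem_powersetCard]
        refine ⟨⟨subset_univ _, ?_⟩, ?_⟩
        · rw [card_erase_of_mem hxe, hc4]
        · rw [erase_inter_of_not_mem e A x hxA]; exact h1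
      · rw [mem_image]
        refine ⟨x, ?_, rfl⟩
        rw [hbadB]
        simp only [mem_filter, mem_sdiff]
        refine ⟨⟨hxB, notMem_erase _ _⟩, ?_⟩
        rw [insert_erase hxe]; exact hnH
    calc 3 * M.card = _ := hQcard.symm
      _ ≤ (T.biUnion (fun S => (badB S).image (fun x => (S, x)))).card := card_le_card hsub
      _ ≤ ∑ S ∈ T, ((badB S).image (fun x => (S, x))).card := card_biUnion_le
      _ ≤ ∑ S ∈ T, (badB S).card := Finset.sum_le_sum (fun S _ => card_image_le)
  -- Step 2 : ∑ goodA ≤ 2 * |H₂|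
  have step2 : ∑ S ∈ T, (goodA S).card ≤ 2 * (H.filter (fun e => (e ∩ A).card = 2)).card := by
    set R := T.biUnion (fun S => (goodA S).image (fun x => (S, x))) with hR
    have hmemR : ∀ p : Finset V × V, p ∈ R ↔ p.1 ∈ T ∧ p.2 ∈ goodA p.1 := by
      rintro ⟨S, x⟩
      simp only [hR, mem_biUnion, mem_image, Prod.mk.injEq]
      constructor
      · rintro ⟨S', hS', x', hx', rfl, rfl⟩; exact ⟨hS', hx'⟩
      · rintro ⟨hS, hx⟩; exact ⟨S, hS, x, hx, rfl, rfl⟩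
    have hRcard : R.card = ∑ S ∈ T, (goodA S).card := by
      rw [hR, card_biUnion]
      · exact Finset.sum_congr rfl (fun S _ =>
          card_image_of_injective _ (fun a b h => congrArg Prod.snd h))
      · intro S hS S' hS' hne
        rw [Function.onFun, disjoint_left]
        rintro ⟨S₁, x⟩ h1 h2
        simp only [mem_image, Prod.mk.injEq] at h1 h2
        obtain ⟨-, -, rfl, -⟩ := h1
        obtain ⟨-, -, rfl, -⟩ := h2
        exact hne rfl
    have hgood : ∀ p ∈ R, p.2 ∈ A ∧ p.2 ∉ p.1 ∧ insert p.2 p.1 ∈ H := by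
      intro p hp
      obtain ⟨-, hx⟩ := (hmemR p).1 hp
      rw [hgoodA] at hx
      simp only [mem_filter] at hx
      exact ⟨hx.1, hx.2.1, hx.2.2⟩
    have himg : R.image (fun p : Finset V × V => insert p.2 p.1)
        ⊆ H.filter (fun e => (e ∩ A).card = 2) := by
      intro e he
      rw [mem_image] at he
      obtain ⟨p, hp, rfl⟩ := he
      obtain ⟨hpT, -⟩ := (hmemR p).1 hp
      obtain ⟨hA2, hnS, hH'⟩ := hgood p hp
      rw [mem_filter]
      refine ⟨hH', ?_⟩
      rw [insert_inter_of_mem hA2, card_insert_of_notMem (fun h => hnS (mem_inter.1 h).1)]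
      rw [(hTfact p.1 hpT).2.1]
    have hfiber : ∀ e ∈ R.image (fun p : Finset V × V => insert p.2 p.1),
        (R.filter (fun p => insert p.2 p.1 = e)).card ≤ 2 := by
      intro e he
      have heH2 := himg he
      rw [mem_filter] at heH2
      have he2 : (e ∩ A).card = 2 := heH2.2
      calc (R.filter (fun p => insert p.2 p.1 = e)).card ≤ (e ∩ A).card := by
            apply card_le_card_of_injOn (fun p => p.2)
            · intro p hp
              rw [mem_coe, mem_filter] at hp
              obtain ⟨hpR, hpe⟩ := hp
              obtain ⟨hA2, -, -⟩ := hgood p hpR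
              exact mem_inter.2 ⟨hpe ▸ mem_insert_self _ _, hA2⟩
            · intro p hp q hq hpq
              simp only [coe_filter, Set.mem_setOf_eq] at hp hq
              obtain ⟨hpR, hpe⟩ := hp
              obtain ⟨hqR, hqe⟩ := hq
              obtain ⟨-, hpnS, -⟩ := hgood p hpR
              obtain ⟨-, hqnS, -⟩ := hgood q hqR
              have hpq' : p.2 = q.2 := hpq
              have h1 : p.1 = q.1 := by
                rw [← erase_insert hpnS, ← erase_insert hqnS, hpe, hqe, hpq']
              exact Prod.ext h1 hpq'
        _ = 2 := he2
    calc ∑ S ∈ T, (goodA S).card = R.card := hRcard.symm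
      _ ≤ 2 * (R.image (fun p : Finset V × V => insert p.2 p.1)).card :=
          card_le_mul_card_image R 2 hfiber
      _ ≤ 2 * (H.filter (fun e => (e ∩ A).card = 2)).card := by
          exact Nat.mul_le_mul_left _ (card_le_card himg)
  -- Step 3 : per-S bound
  have step3 : ∀ S ∈ T, ((badB S).card : ℝ) ≤ c₁ * n + (goodA S).card := by
    intro S hS
    obtain ⟨hc3, h1, -⟩ := hTfact S hS
    have hcodS := hcod S hc3
    have hsplit : (Finset.univ.filter (fun x => x ∉ S ∧ insert x S ∈ H)).card
        ≤ (goodA S).card + (B.filter (fun x => x ∉ S ∧ insert x S ∈ H)).card := by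
      rw [hgoodA]
      calc (Finset.univ.filter (fun x => x ∉ S ∧ insert x S ∈ H)).card
          = ((A ∪ B).filter (fun x => x ∉ S ∧ insert x S ∈ H)).card := by rw [hu]
        _ = ((A.filter (fun x => x ∉ S ∧ insert x S ∈ H))
              ∪ (B.filter (fun x => x ∉ S ∧ insert x S ∈ H))).card := by rw [filter_union]
        _ ≤ _ := card_union_le _ _
    have hBS : (B.filter (fun x => x ∉ S ∧ insert x S ∈ H)).card
        = ((B \ S).filter (fun x => insert x S ∈ H)).card := by
      congr 1
      ext x
      simp only [mem_filter, mem_sdiff]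
      tauto
    have hpart : ((B \ S).filter (fun x => insert x S ∈ H)).card + (badB S).card
        = (B \ S).card := by
      rw [hbadB]
      exact card_filter_add_card_filter_not _
    have hBScard : (B \ S).card ≤ n := hB ▸ card_le_card (sdiff_subset)
    have h1' : ((B \ S).filter (fun x => insert x S ∈ H)).card + (badB S).card ≤ n :=
      hpart ▸ hBScard
    have h2' : (1 - c₁) * n ≤ ((goodA S).card : ℝ)
        + (((B \ S).filter (fun x => insert x S ∈ H)).card : ℝ) := by
      calc (1 - c₁) * n ≤ _ := hcodS
        _ ≤ _ := by exact_mod_cast hBS ▸ hsplit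
    have h1'' : (((B \ S).filter (fun x => insert x S ∈ H)).card : ℝ)
        + ((badB S).card : ℝ) ≤ (n : ℝ) := by exact_mod_cast h1'
    nlinarith [h1'', h2']
  -- Step 4 : T.card ≤ n^3/2
  have step4 : (T.card : ℝ) ≤ (n : ℝ) ^ 3 / 2 := by
    have hinj : T.card ≤ ((A.powersetCard 1) ×ˢ (B.powersetCard 2)).card := by
      apply card_le_card_of_injOn (fun S => (S ∩ A, S ∩ B))
      · intro S hS
        obtain ⟨-, hSA, hSB⟩ := hTfact S hS
        rw [mem_coe, mem_product, mem_powersetCard, mem_powersetCard]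
        exact ⟨⟨inter_subset_right, hSA⟩, ⟨inter_subset_right, hSB⟩⟩
      · intro S hS S' hS' h
        simp only [Prod.mk.injEq] at h
        have hrec : ∀ X : Finset V, X ∩ A ∪ X ∩ B = X := by
          intro X
          rw [← inter_union_distrib_left, hu, inter_univ]
        rw [← hrec S, ← hrec S', h.1, h.2]
    have hcard : ((A.powersetCard 1) ×ˢ (B.powersetCard 2)).card = n * n.choose 2 := by
      rw [card_product, card_powersetCard, card_powersetCard, hA, hB, Nat.choose_one_right]
    have hch : ((n.choose 2 : ℕ) : ℝ) ≤ (n : ℝ) ^ 2 / 2 := by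
      rw [Nat.choose_two_right]
      calc ((n * (n - 1) / 2 : ℕ) : ℝ) ≤ ((n * (n - 1) : ℕ) : ℝ) / 2 := Nat.cast_div_le
        _ ≤ (n : ℝ) ^ 2 / 2 := by
            have h1 : ((n - 1 : ℕ) : ℝ) ≤ (n : ℝ) := by exact_mod_cast Nat.sub_le n 1
            have h2 : (0 : ℝ) ≤ (n : ℝ) := Nat.cast_nonneg n
            push_cast
            nlinarith
    calc (T.card : ℝ) ≤ ((n * n.choose 2 : ℕ) : ℝ) := by exact_mod_cast hcard ▸ hinj
      _ = (n : ℝ) * ((n.choose 2 : ℕ) : ℝ) := by push_cast; ring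
      _ ≤ (n : ℝ) * ((n : ℝ) ^ 2 / 2) := by
          exact mul_le_mul_of_nonneg_left hch (Nat.cast_nonneg n)
      _ = (n : ℝ) ^ 3 / 2 := by ring
  -- Combine
  have h1 : (3 : ℝ) * M.card ≤ ∑ S ∈ T, ((badB S).card : ℝ) := by
    have := step1
    push_cast
    exact_mod_cast Nat.cast_le.2 this
  have h2 : ∑ S ∈ T, ((badB S).card : ℝ)
      ≤ (T.card : ℝ) * (c₁ * n) + ∑ S ∈ T, ((goodA S).card : ℝ) := by
    calc ∑ S ∈ T, ((badB S).card : ℝ) ≤ ∑ S ∈ T, (c₁ * n + ((goodA S).card : ℝ)) :=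
          Finset.sum_le_sum step3
      _ = (T.card : ℝ) * (c₁ * n) + ∑ S ∈ T, ((goodA S).card : ℝ) := by
          rw [Finset.sum_add_distrib, sum_const, nsmul_eq_mul]
  have h3 : ∑ S ∈ T, ((goodA S).card : ℝ) ≤ 2 * c * n ^ 4 := by
    calc ∑ S ∈ T, ((goodA S).card : ℝ)
        = ((∑ S ∈ T, (goodA S).card : ℕ) : ℝ) := by push_cast; ring
      _ ≤ ((2 * (H.filter (fun e => (e ∩ A).card = 2)).card : ℕ) : ℝ) := Nat.cast_le.2 step2
      _ ≤ 2 * c * n ^ 4 := by push_cast; nlinarith [hH2]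
  have h4 : (T.card : ℝ) * (c₁ * n) ≤ ((n : ℝ) ^ 3 / 2) * (c₁ * n) := by
    apply mul_le_mul_of_nonneg_right step4
    positivity
  have h5 : ((n : ℝ) ^ 3 / 2) * (c₁ * n) = (c₁ / 2) * (n : ℝ) ^ 4 := by ring
  linarith
end Aux

theorem stmt_0 :
    ∀ c c₁ : ℝ, 0 < c → 0 < c₁ → ∃ n₀ : ℕ, ∀ n : ℕ, n₀ ≤ n →
    ∀ (V : Type) [Fintype V] [DecidableEq V],
    ∀ (A B : Finset V) (H : Finset (Finset V)),
      Disjoint A B → A ∪ B = Finset.univ → A.card = n → B.card = n →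
      (∀ e ∈ H, e.card = 4) →
      ((H.filter (fun e => (e ∩ A).card = 2)).card : ℝ) < c * n ^ 4 →
      (∀ S : Finset V, S.card = 3 →
        (1 - c₁) * n ≤ ((Finset.univ.filter (fun x => x ∉ S ∧ insert x S ∈ H)).card : ℝ)) →
      (((((Finset.univ : Finset V).powersetCard 4).filter
            (fun e => (e ∩ A).card = 1 ∨ (e ∩ A).card = 3)) \ H).card : ℝ)
        ≤ (1/3) * (c₁ + 4*c) * n ^ 4 + 10 * n ^ 3 := by
  intro c c₁ hc hc₁
  refine ⟨0, fun n _ V _ _ A B H hd hu hA hB hH4 hH2 hcod => ?_⟩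
  classical
  have hH2' : ((H.filter (fun e => (e ∩ B).card = 2)).card : ℝ) < c * n ^ 4 := by
    have : H.filter (fun e => (e ∩ B).card = 2) = H.filter (fun e => (e ∩ A).card = 2) := by
      apply filter_congr
      intro e he
      have h4 := hH4 e he
      have := inter_card_split A B e hd hu
      constructor <;> intro h <;> omega
    rw [this]; exact hH2
  have bndA := master c c₁ hc₁.le n A B H hd hu hA hB hH4 hH2 hcod
  have bndB := master c c₁ hc₁.le n B A H hd.symm (by rw [union_comm]; exact hu) hB hA hH4
    hH2' hcod
  have hsub : ((((Finset.univ : Finset V).powersetCard 4).filter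
        (fun e => (e ∩ A).card = 1 ∨ (e ∩ A).card = 3)) \ H)
      ⊆ (((Finset.univ : Finset V).powersetCard 4).filter
          (fun e => (e ∩ A).card = 1 ∧ e ∉ H))
        ∪ (((Finset.univ : Finset V).powersetCard 4).filter
          (fun e => (e ∩ B).card = 1 ∧ e ∉ H)) := by
    intro e he
    rw [mem_sdiff, mem_filter, mem_powersetCard] at he
    obtain ⟨⟨⟨hsub', hc4⟩, hor⟩, hnH⟩ := he
    have hAB := inter_card_split A B e hd hu
    rw [mem_union, mem_filter, mem_filter, mem_powersetCard]
    rcases hor with h | h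
    · exact Or.inl ⟨⟨hsub', hc4⟩, h, hnH⟩
    · exact Or.inr ⟨⟨hsub', hc4⟩, by omega, hnH⟩
  have hcount : (((((Finset.univ : Finset V).powersetCard 4).filter
        (fun e => (e ∩ A).card = 1 ∨ (e ∩ A).card = 3)) \ H).card : ℝ)
      ≤ ((((Finset.univ : Finset V).powersetCard 4).filter
          (fun e => (e ∩ A).card = 1 ∧ e ∉ H)).card : ℝ)
        + ((((Finset.univ : Finset V).powersetCard 4).filter
          (fun e => (e ∩ B).card = 1 ∧ e ∉ H)).card : ℝ) := by
    have := (card_le_card hsub).trans (card_union_le _ _)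
    exact_mod_cast this
  have hn3 : (0 : ℝ) ≤ 10 * (n : ℝ) ^ 3 := by positivity
  calc (((((Finset.univ : Finset V).powersetCard 4).filter
        (fun e => (e ∩ A).card = 1 ∨ (e ∩ A).card = 3)) \ H).card : ℝ)
      ≤ _ := hcount
    _ ≤ (1/3) * ((c₁/2) * n ^ 4 + 2 * c * n ^ 4) + (1/3) * ((c₁/2) * n ^ 4 + 2 * c * n ^ 4) :=
        add_le_add bndA bndB
    _ = (1/3) * (c₁ + 4*c) * n ^ 4 := by ring
    _ ≤ (1/3) * (c₁ + 4*c) * n ^ 4 + 10 * n ^ 3 := by linarith
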